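/- arXiv:1212.5288 — 2 statements merged into one kernel-verified Lean document; each statement's English description precedes it below -/
import Mathlib

section
/- If a matrix Θ satisfies the restricted isometry property of order 2k with constant δ₂ₖ, and 2k ≤ k₁ + k₂ with k₁, k₂ ≤ k each positive, then for any two vectors u, v with disjoint supports, ‖u‖₀ ≤ k and ‖v‖₀ ≤ k, we have |⟨Θu, Θv⟩| ≤ δ₂ₖ ‖u‖₂ ‖v‖₂. -/
open Matrix

/-- Euclidean norm of a vector. -/
noncomputable def enorm₂ {m : ℕ} (v : Fin m → ℝ) : ℝ := Real.sqrt (∑ i, v i ^ 2)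

/-- The restricted isometry property of order `s` with constant `δ`. -/
def RIP {m n : ℕ} (Θ : Matrix (Fin m) (Fin n) ℝ) (s : ℕ) (δ : ℝ) : Prop :=
  ∀ x : Fin n → ℝ, Set.ncard {i | x i ≠ 0} ≤ s →
    (1 - δ) * (∑ i, x i ^ 2) ≤ (∑ i, (Θ.mulVec x) i ^ 2) ∧
      (∑ i, (Θ.mulVec x) i ^ 2) ≤ (1 + δ) * (∑ i, x i ^ 2)

theorem stmt7 {m n k k₁ k₂ : ℕ} (Θ : Matrix (Fin m) (Fin n) ℝ) (δ : ℝ)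
    (hRIP : RIP Θ (2 * k) δ)
    (hk₁ : 0 < k₁) (hk₂ : 0 < k₂) (hk₁k : k₁ ≤ k) (hk₂k : k₂ ≤ k)
    (h2k : 2 * k ≤ k₁ + k₂)
    (u v : Fin n → ℝ)
    (hu : Set.ncard {i | u i ≠ 0} ≤ k) (hv : Set.ncard {i | v i ≠ 0} ≤ k)
    (hdisj : ∀ i, u i = 0 ∨ v i = 0) :
    |∑ i, (Θ.mulVec u) i * (Θ.mulVec v) i| ≤ δ * enorm₂ u * enorm₂ v := by
  set A := ∑ i, u i ^ 2 with hA
  set B := ∑ i, v i ^ 2 with hB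
  have hAnn : 0 ≤ A := Finset.sum_nonneg fun i _ => sq_nonneg _
  have hBnn : 0 ≤ B := Finset.sum_nonneg fun i _ => sq_nonneg _
  -- degenerate cases
  by_cases hA0 : A = 0
  · have huz : ∀ i, u i = 0 := by
      intro i
      have h := (Finset.sum_eq_zero_iff_of_nonneg (fun i _ => sq_nonneg (u i))).mp hA0
      exact pow_eq_zero_iff (n := 2) (by norm_num) |>.mp (h i (Finset.mem_univ i))
    have hmu : ∀ i, Θ.mulVec u i = 0 := by
      intro i
      simp only [Matrix.mulVec, dotProduct]
      exact Finset.sum_eq_zero fun j _ => by rw [huz j, mul_zero]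
    have : (∑ i, (Θ.mulVec u) i * (Θ.mulVec v) i) = 0 :=
      Finset.sum_eq_zero fun i _ => by rw [hmu i, zero_mul]
    rw [this, abs_zero]
    have : enorm₂ u = 0 := by simp [enorm₂, ← hA, hA0]
    rw [this, mul_zero, zero_mul]
  by_cases hB0 : B = 0
  · have hvz : ∀ i, v i = 0 := by
      intro i
      have h := (Finset.sum_eq_zero_iff_of_nonneg (fun i _ => sq_nonneg (v i))).mp hB0
      exact pow_eq_zero_iff (n := 2) (by norm_num) |>.mp (h i (Finset.mem_univ i))
    have hmv : ∀ i, Θ.mulVec v i = 0 := by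
      intro i
      simp only [Matrix.mulVec, dotProduct]
      exact Finset.sum_eq_zero fun j _ => by rw [hvz j, mul_zero]
    have : (∑ i, (Θ.mulVec u) i * (Θ.mulVec v) i) = 0 :=
      Finset.sum_eq_zero fun i _ => by rw [hmv i, mul_zero]
    rw [this, abs_zero]
    have : enorm₂ v = 0 := by simp [enorm₂, ← hB, hB0]
    rw [this, mul_zero]
  have hApos : 0 < A := lt_of_le_of_ne hAnn (Ne.symm hA0)
  have hBpos : 0 < B := lt_of_le_of_ne hBnn (Ne.symm hB0)
  set a := Real.sqrt B with ha
  set b := Real.sqrt A with hb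
  have hapos : 0 < a := Real.sqrt_pos.mpr hBpos
  have hbpos : 0 < b := Real.sqrt_pos.mpr hApos
  have ha2 : a ^ 2 = B := Real.sq_sqrt hBnn
  have hb2 : b ^ 2 = A := Real.sq_sqrt hAnn
  -- sparsity of linear combinations
  have hsupp : ∀ c d : ℝ, Set.ncard {i | c * u i + d * v i ≠ 0} ≤ 2 * k := by
    intro c d
    have hsub : {i | c * u i + d * v i ≠ 0} ⊆ {i | u i ≠ 0} ∪ {i | v i ≠ 0} := by
      intro i hi
      by_contra h
      simp only [Set.mem_union, Set.mem_setOf_eq, not_or, not_not] at h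
      exact hi (by simp [h.1, h.2])
    calc Set.ncard {i | c * u i + d * v i ≠ 0}
        ≤ Set.ncard ({i | u i ≠ 0} ∪ {i | v i ≠ 0}) :=
          Set.ncard_le_ncard hsub (Set.toFinite _)
      _ ≤ Set.ncard {i | u i ≠ 0} + Set.ncard {i | v i ≠ 0} := Set.ncard_union_le _ _
      _ ≤ k + k := Nat.add_le_add hu hv
      _ = 2 * k := (two_mul k).symm
  -- mulVec linearity
  have hmv : ∀ (c d : ℝ) (i : Fin m),
      Θ.mulVec (fun j => c * u j + d * v j) i = c * Θ.mulVec u i + d * Θ.mulVec v i := by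
    intro c d i
    simp only [Matrix.mulVec, dotProduct, Finset.mul_sum]
    rw [← Finset.sum_add_distrib]
    exact Finset.sum_congr rfl fun j _ => by ring
  set P := ∑ i, (Θ.mulVec u) i ^ 2 with hP
  set Q := ∑ i, (Θ.mulVec v) i ^ 2 with hQ
  set S := ∑ i, (Θ.mulVec u) i * (Θ.mulVec v) i with hS
  have hUV : (∑ i, u i * v i) = 0 :=
    Finset.sum_eq_zero fun i _ => by rcases hdisj i with h | h <;> simp [h]
  -- sum of squares of combination (domain side)
  have hdom : ∀ c d : ℝ, (∑ i, (c * u i + d * v i) ^ 2) = c ^ 2 * A + d ^ 2 * B := by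
    intro c d
    have : (∑ i, (c * u i + d * v i) ^ 2)
        = c ^ 2 * (∑ i, u i ^ 2) + 2 * c * d * (∑ i, u i * v i) + d ^ 2 * (∑ i, v i ^ 2) := by
      rw [Finset.mul_sum, Finset.mul_sum, Finset.mul_sum, ← Finset.sum_add_distrib,
        ← Finset.sum_add_distrib]
      exact Finset.sum_congr rfl fun i _ => by ring
    rw [this, hUV]; ring
  -- sum of squares of image of combination
  have hran : ∀ c d : ℝ, (∑ i, (Θ.mulVec (fun j => c * u j + d * v j)) i ^ 2)
      = c ^ 2 * P + 2 * c * d * S + d ^ 2 * Q := by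
    intro c d
    have h1 : (∑ i, (Θ.mulVec (fun j => c * u j + d * v j)) i ^ 2)
        = ∑ i, (c * Θ.mulVec u i + d * Θ.mulVec v i) ^ 2 :=
      Finset.sum_congr rfl fun i _ => by rw [hmv c d i]
    rw [h1, hP, hQ, hS, Finset.mul_sum, Finset.mul_sum, Finset.mul_sum,
      ← Finset.sum_add_distrib, ← Finset.sum_add_distrib]
    exact Finset.sum_congr rfl fun i _ => by ring
  have hplus := hRIP (fun j => a * u j + b * v j) (hsupp a b)
  have hminus := hRIP (fun j => a * u j + (-b) * v j) (hsupp a (-b))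
  rw [hdom, hran] at hplus hminus
  have e1 : a ^ 2 * P + 2 * a * b * S + b ^ 2 * Q ≤ (1 + δ) * (a ^ 2 * A + b ^ 2 * B) :=
    hplus.2
  have e2 : (1 - δ) * (a ^ 2 * A + (-b) ^ 2 * B)
      ≤ a ^ 2 * P + 2 * a * (-b) * S + (-b) ^ 2 * Q := hminus.1
  have e4 : a ^ 2 * P + 2 * a * (-b) * S + (-b) ^ 2 * Q
      ≤ (1 + δ) * (a ^ 2 * A + (-b) ^ 2 * B) := hminus.2
  have e5 : (1 - δ) * (a ^ 2 * A + b ^ 2 * B) ≤ a ^ 2 * P + 2 * a * b * S + b ^ 2 * Q :=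
    hplus.1
  have henu : enorm₂ u = b := rfl
  have henv : enorm₂ v = a := rfl
  clear_value A B a b P Q S
  have hA' : A = b ^ 2 := hb2.symm
  have hB' : B = a ^ 2 := ha2.symm
  rw [hA', hB'] at e1 e2 e4 e5
  have key1 : a * b * S ≤ δ * (a * b) ^ 2 := by nlinarith [e1, e2]
  have key2 : -(a * b * S) ≤ δ * (a * b) ^ 2 := by nlinarith [e4, e5]
  rw [henu, henv]
  rw [abs_le]
  have hab : 0 < a * b := mul_pos hapos hbpos
  have h1 : S ≤ δ * (a * b) := by
    have k1' : a * b * S ≤ a * b * (δ * (a * b)) := by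
      calc a * b * S ≤ δ * (a * b) ^ 2 := key1
        _ = a * b * (δ * (a * b)) := by ring
    exact le_of_mul_le_mul_left k1' hab
  have h2 : -S ≤ δ * (a * b) := by
    have k2' : a * b * (-S) ≤ a * b * (δ * (a * b)) := by
      calc a * b * (-S) = -(a * b * S) := by ring
        _ ≤ δ * (a * b) ^ 2 := key2
        _ = a * b * (δ * (a * b)) := by ring
    exact le_of_mul_le_mul_left k2' hab
  constructor
  · linarith [h2]
  · linarith [h1]
end

section
/- Suppose Θ is an m×n matrix satisfying RIP of order 2k with constant δ₂ₖ < √2 − 1, measurements z = Θ·s + e with ‖e‖₂ ≤ ε, and ŝ is any minimizer of ‖s'‖₁ subject to ‖z − Θs'‖₂ ≤ ε. Then ‖ŝ − s‖₂ ≤ c₁·ε + (c₂/√k)·‖s − s_k‖₁, where s_k is a best k-sparse approximation of s, c₁ = 4√(1+δ₂ₖ)/(1−(1+√2)δ₂ₖ) and c₂ = 2(1−(1−√2)δ₂ₖ)/(1−(1+√2)δ₂ₖ). -/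
open Matrix

/-- Euclidean norm. -/
noncomputable def eucNorm {m : ℕ} (v : Fin m → ℝ) : ℝ := Real.sqrt (∑ i, v i ^ 2)

/-- ℓ₁ norm. -/
def l1norm {m : ℕ} (v : Fin m → ℝ) : ℝ := ∑ i, |v i|

namespace CandesAux

/-- restriction of a vector to a finite index set -/
def res {n : ℕ} (T : Finset (Fin n)) (v : Fin n → ℝ) : Fin n → ℝ :=
  fun i => if i ∈ T then v i else 0

lemma sum_sq_nonneg {m : ℕ} (v : Fin m → ℝ) : (0:ℝ) ≤ ∑ i, v i ^ 2 :=
  Finset.sum_nonneg fun i _ => sq_nonneg _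

lemma enorm_nonneg {m : ℕ} (v : Fin m → ℝ) : 0 ≤ eucNorm v := Real.sqrt_nonneg _

lemma enorm_sq {m : ℕ} (v : Fin m → ℝ) : eucNorm v ^ 2 = ∑ i, v i ^ 2 :=
  Real.sq_sqrt (sum_sq_nonneg v)

lemma enorm_eq_zero {m : ℕ} {v : Fin m → ℝ} (h : eucNorm v = 0) : v = 0 := by
  have h2 : ∑ i, v i ^ 2 = 0 := by
    have := enorm_sq v; rw [h] at this; simpa using this.symm
  funext i
  have := (Finset.sum_eq_zero_iff_of_nonneg (fun i _ => sq_nonneg (v i))).1 h2 i (Finset.mem_univ i)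
  exact pow_eq_zero_iff (by norm_num) |>.1 this

lemma enorm_mono {m : ℕ} {u v : Fin m → ℝ} (h : ∑ i, u i ^ 2 ≤ ∑ i, v i ^ 2) :
    eucNorm u ≤ eucNorm v := Real.sqrt_le_sqrt h

/-- Cauchy–Schwarz -/
lemma ip_le {m : ℕ} (u v : Fin m → ℝ) : ∑ i, u i * v i ≤ eucNorm u * eucNorm v := by
  have h := Finset.sum_mul_sq_le_sq_mul_sq Finset.univ u v
  have h1 : ∑ i, u i * v i ≤ |∑ i, u i * v i| := le_abs_self _
  have h2 : |∑ i, u i * v i| = Real.sqrt ((∑ i, u i * v i)^2) := (Real.sqrt_sq_eq_abs _).symm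
  calc ∑ i, u i * v i ≤ Real.sqrt ((∑ i, u i * v i)^2) := by rw [← h2]; exact h1
    _ ≤ Real.sqrt ((∑ i, u i ^ 2) * (∑ i, v i ^ 2)) := Real.sqrt_le_sqrt h
    _ = eucNorm u * eucNorm v := by
        rw [Real.sqrt_mul (sum_sq_nonneg u)]; rfl

lemma enorm_add_le {m : ℕ} (u v : Fin m → ℝ) : eucNorm (u + v) ≤ eucNorm u + eucNorm v := by
  have key : ∑ i, (u + v) i ^ 2 ≤ (eucNorm u + eucNorm v)^2 := by
    have expand : ∑ i, (u + v) i ^ 2 = (∑ i, u i ^2) + 2 * (∑ i, u i * v i) + ∑ i, v i ^2 := by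
      simp only [Pi.add_apply, add_sq]
      rw [Finset.sum_add_distrib, Finset.sum_add_distrib, Finset.mul_sum]
      ring_nf
    rw [expand, add_sq, ← enorm_sq u, ← enorm_sq v]
    have := ip_le u v
    nlinarith
  calc eucNorm (u + v) = Real.sqrt (∑ i, (u+v) i ^2) := rfl
    _ ≤ Real.sqrt ((eucNorm u + eucNorm v)^2) := Real.sqrt_le_sqrt key
    _ = |eucNorm u + eucNorm v| := Real.sqrt_sq_eq_abs _
    _ = eucNorm u + eucNorm v := abs_of_nonneg (add_nonneg (enorm_nonneg u) (enorm_nonneg v))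

lemma enorm_neg {m : ℕ} (v : Fin m → ℝ) : eucNorm (-v) = eucNorm v := by
  unfold eucNorm; congr 1; apply Finset.sum_congr rfl; intro i _; simp [neg_pow]

lemma enorm_sub_le {m : ℕ} (u v : Fin m → ℝ) : eucNorm (u - v) ≤ eucNorm u + eucNorm v := by
  have := enorm_add_le u (-v)
  rw [enorm_neg] at this
  simpa [sub_eq_add_neg] using this

lemma enorm_res {n : ℕ} (T : Finset (Fin n)) (v : Fin n → ℝ) :
    eucNorm (res T v) = Real.sqrt (∑ i ∈ T, v i ^ 2) := by
  unfold eucNorm res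
  congr 1
  have h : ∀ i, (if i ∈ T then v i else 0)^2 = if i ∈ T then v i ^ 2 else 0 := by
    intro i; split <;> simp
  simp_rw [h]
  rw [Finset.sum_ite_mem, Finset.univ_inter]

lemma l1norm_res {n : ℕ} (T : Finset (Fin n)) (v : Fin n → ℝ) :
    l1norm (res T v) = ∑ i ∈ T, |v i| := by
  unfold l1norm res
  have h : ∀ i, |if i ∈ T then v i else 0| = if i ∈ T then |v i| else 0 := by
    intro i; split <;> simp
  simp_rw [h]
  rw [Finset.sum_ite_mem, Finset.univ_inter]

lemma res_support {n : ℕ} (T : Finset (Fin n)) (v : Fin n → ℝ) :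
    Set.ncard {i | res T v i ≠ 0} ≤ T.card := by
  have hsub : {i | res T v i ≠ 0} ⊆ ↑T := by
    intro i hi
    simp only [res, Set.mem_setOf_eq] at hi
    by_contra hiT
    exact hi (if_neg hiT)
  calc Set.ncard {i | res T v i ≠ 0} ≤ (↑T : Set (Fin n)).ncard :=
        Set.ncard_le_ncard hsub (T.finite_toSet)
    _ = T.card := Set.ncard_coe_finset T

/-- top-k subset -/
lemma exists_top_subset {n : ℕ} (k : ℕ) (S : Finset (Fin n)) (f : Fin n → ℝ) :
    ∃ A ⊆ S, A.card = min k S.card ∧ ∀ a ∈ A, ∀ b ∈ S \ A, f b ≤ f a := by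
  induction k generalizing S with
  | zero => exact ⟨∅, Finset.empty_subset S, by simp, by simp⟩
  | succ k ih =>
    rcases S.eq_empty_or_nonempty with rfl | hS
    · exact ⟨∅, Finset.empty_subset _, by simp, by simp⟩
    · obtain ⟨a, haS, ha⟩ := S.exists_max_image f hS
      obtain ⟨A', hA'sub, hA'card, hA'⟩ := ih (S.erase a)
      refine ⟨insert a A', ?_, ?_, ?_⟩
      · intro x hx
        rcases Finset.mem_insert.1 hx with rfl | hx
        · exact haS
        · exact Finset.mem_of_mem_erase (hA'sub hx)
      · have hanA' : a ∉ A' := fun h => (Finset.mem_erase.1 (hA'sub h)).1 rfl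
        rw [Finset.card_insert_of_notMem hanA', hA'card, Finset.card_erase_of_mem haS]
        have h1 : 1 ≤ S.card := Finset.card_pos.2 hS
        omega
      · intro x hx b hb
        have hbS : b ∈ S := (Finset.mem_sdiff.1 hb).1
        have hbA : b ∉ insert a A' := (Finset.mem_sdiff.1 hb).2
        rcases Finset.mem_insert.1 hx with rfl | hx
        · exact ha b hbS
        · have hbe : b ∈ (S.erase a) \ A' := by
            rw [Finset.mem_sdiff, Finset.mem_erase]
            exact ⟨⟨fun h => hbA (h ▸ Finset.mem_insert_self a A'), hbS⟩,
              fun h => hbA (Finset.mem_insert_of_mem h)⟩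
          exact hA' x hx b hbe

lemma subset_foldr_union {n : ℕ} (l : List (Finset (Fin n))) (T : Finset (Fin n))
    (hT : T ∈ l) : T ⊆ l.foldr (· ∪ ·) ∅ := by
  induction l with
  | nil => cases hT
  | cons a l ihl =>
    rcases List.mem_cons.1 hT with rfl | hT
    · exact Finset.subset_union_left
    · exact (ihl hT).trans Finset.subset_union_right

/-- chunk decomposition lemma -/
lemma chunk {n : ℕ} (k : ℕ) (hk : 0 < k) (v : Fin n → ℝ) (S : Finset (Fin n)) :
    ∃ (T1 : Finset (Fin n)) (rest : List (Finset (Fin n))),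
      (T1 :: rest).Pairwise (fun A B => Disjoint A B) ∧
      (∀ T ∈ T1 :: rest, T.card ≤ k) ∧
      ((T1 :: rest).foldr (· ∪ ·) ∅ = S) ∧
      ((rest.map (fun T => Real.sqrt (∑ i ∈ T, v i ^ 2))).sum ≤
        (∑ i ∈ S, |v i|) / Real.sqrt k) := by
  induction S using Finset.strongInductionOn with
  | _ S ih =>
  by_cases hle : S.card ≤ k
  · refine ⟨S, [], by simp, by simpa using hle, by simp, ?_⟩
    simp only [List.map_nil, List.sum_nil]
    apply div_nonneg (Finset.sum_nonneg fun i _ => abs_nonneg _) (Real.sqrt_nonneg _)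
  · push_neg at hle
    obtain ⟨A, hAS, hAcard, hAtop⟩ := exists_top_subset k S (fun i => |v i|)
    have hAcard' : A.card = k := by rw [hAcard]; omega
    have hAne : A.Nonempty := Finset.card_pos.1 (by omega)
    have hssub : S \ A ⊂ S := Finset.sdiff_ssubset hAS hAne
    obtain ⟨T1', rest', hdisj', hcard', hunion', hsum'⟩ := ih (S \ A) hssub
    have hsubfold : ∀ T ∈ T1' :: rest', T ⊆ S \ A := by
      intro T hT
      rw [← hunion']
      exact subset_foldr_union _ T hT
    refine ⟨A, T1' :: rest', ?_, ?_, ?_, ?_⟩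
    · rw [List.pairwise_cons]
      refine ⟨fun T hT => ?_, hdisj'⟩
      have := hsubfold T hT
      exact Finset.disjoint_left.2 fun a haA haT =>
        (Finset.mem_sdiff.1 (this haT)).2 haA
    · intro T hT
      rcases List.mem_cons.1 hT with rfl | hT
      · exact le_of_eq hAcard'
      · exact hcard' T hT
    · show A ∪ (T1' :: rest').foldr (· ∪ ·) ∅ = S
      rw [hunion']
      exact Finset.union_sdiff_of_subset hAS
    · have hk0 : (0:ℝ) < Real.sqrt k := Real.sqrt_pos.2 (by exact_mod_cast hk)
      have hkk : Real.sqrt k * Real.sqrt k = (k:ℝ) := Real.mul_self_sqrt (by positivity)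
      set SA := ∑ i ∈ A, |v i| with hSA
      have hSAnn : 0 ≤ SA := Finset.sum_nonneg fun i _ => abs_nonneg _
      have hbd : ∀ b ∈ T1', |v b| ≤ SA / k := by
        intro b hb
        have hbSA : b ∈ S \ A := hsubfold T1' (List.mem_cons_self) hb
        have hsum : (A.card : ℝ) * |v b| ≤ SA := by
          calc (A.card : ℝ) * |v b| = ∑ _a ∈ A, |v b| := by
                rw [Finset.sum_const, nsmul_eq_mul]
            _ ≤ ∑ a ∈ A, |v a| := Finset.sum_le_sum fun a ha => hAtop a ha b hbSA
        rw [hAcard'] at hsum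
        rw [le_div_iff₀ (by exact_mod_cast hk : (0:ℝ) < (k:ℝ))]
        linarith
      have hfirst : Real.sqrt (∑ i ∈ T1', v i ^ 2) ≤ SA / Real.sqrt k := by
        have h1 : ∑ i ∈ T1', v i ^ 2 ≤ (k:ℝ) * (SA / k)^2 := by
          calc ∑ i ∈ T1', v i ^ 2 ≤ ∑ _i ∈ T1', (SA / k)^2 := by
                apply Finset.sum_le_sum
                intro i hi
                have := hbd i hi
                calc v i ^ 2 = |v i|^2 := (sq_abs _).symm
                  _ ≤ (SA / k)^2 := by
                      apply pow_le_pow_left₀ (abs_nonneg _) this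
            _ = (T1'.card : ℝ) * (SA / k)^2 := by rw [Finset.sum_const, nsmul_eq_mul]
            _ ≤ (k:ℝ) * (SA / k)^2 := by
                apply mul_le_mul_of_nonneg_right _ (sq_nonneg _)
                exact_mod_cast hcard' T1' (List.mem_cons_self)
        calc Real.sqrt (∑ i ∈ T1', v i ^ 2) ≤ Real.sqrt ((k:ℝ) * (SA / k)^2) :=
              Real.sqrt_le_sqrt h1
          _ = Real.sqrt k * (SA / k) := by
              rw [Real.sqrt_mul (by positivity), Real.sqrt_sq (by positivity)]
          _ = SA / Real.sqrt k := by
              rw [eq_div_iff (ne_of_gt hk0)]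
              field_simp
              nlinarith [hkk]
      calc ((T1' :: rest').map (fun T => Real.sqrt (∑ i ∈ T, v i ^ 2))).sum
          = Real.sqrt (∑ i ∈ T1', v i ^ 2) +
            (rest'.map (fun T => Real.sqrt (∑ i ∈ T, v i ^ 2))).sum := by
            simp
        _ ≤ SA / Real.sqrt k + (∑ i ∈ S \ A, |v i|) / Real.sqrt k :=
            add_le_add hfirst hsum'
        _ = (∑ i ∈ S, |v i|) / Real.sqrt k := by
            rw [← add_div]
            congr 1
            rw [add_comm, Finset.sum_sdiff hAS]



lemma enorm_zero {m : ℕ} : eucNorm (0 : Fin m → ℝ) = 0 := by simp [eucNorm]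

lemma support_ncard_le {n : ℕ} (T : Finset (Fin n)) (f : Fin n → ℝ)
    (h : ∀ i ∉ T, f i = 0) : Set.ncard {i | f i ≠ 0} ≤ T.card := by
  have hsub : {i | f i ≠ 0} ⊆ ↑T := fun i hi => by
    by_contra hiT
    exact hi (h i (by simpa using hiT))
  calc Set.ncard {i | f i ≠ 0} ≤ (↑T : Set (Fin n)).ncard :=
        Set.ncard_le_ncard hsub (T.finite_toSet)
    _ = T.card := Set.ncard_coe_finset T

/-- inner product of the images of disjointly supported vectors under RIP -/
lemma ip_mulVec_le {m n k : ℕ} (Θ : Matrix (Fin m) (Fin n) ℝ) (δ : ℝ)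
    (hRIP : RIP Θ (2 * k) δ) (x y : Fin n → ℝ) (A B : Finset (Fin n))
    (hA : ∀ i ∉ A, x i = 0) (hB : ∀ i ∉ B, y i = 0)
    (hAB : Disjoint A B) (hcard : A.card + B.card ≤ 2 * k) :
    ∑ i, (Θ.mulVec x) i * (Θ.mulVec y) i ≤ δ * eucNorm x * eucNorm y := by
  have hxy0 : ∀ i, x i * y i = 0 := by
    intro i
    by_cases hiA : i ∈ A
    · rw [hB i (Finset.disjoint_left.1 hAB hiA), mul_zero]
    · rw [hA i hiA, zero_mul]
  -- key: for any a > 0, 4 ip ≤ 2δ (a P + Q / a)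
  have key : ∀ a : ℝ, 0 < a →
      4 * (∑ i, (Θ.mulVec x) i * (Θ.mulVec y) i) ≤
        2 * δ * (a * (∑ i, x i ^ 2) + (∑ i, y i ^ 2) / a) := by
    intro a ha
    set c := Real.sqrt a with hc
    have hc0 : 0 < c := Real.sqrt_pos.2 ha
    have hcc : c * c = a := Real.mul_self_sqrt ha.le
    set u : Fin n → ℝ := fun i => c * x i with hu
    set w : Fin n → ℝ := fun i => c⁻¹ * y i with hw
    have hsupp : ∀ v : Fin n → ℝ, (∀ i ∉ A ∪ B, v i = 0) →
        Set.ncard {i | v i ≠ 0} ≤ 2 * k := by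
      intro v hv
      calc Set.ncard {i | v i ≠ 0} ≤ (A ∪ B).card := support_ncard_le _ _ hv
        _ ≤ A.card + B.card := Finset.card_union_le A B
        _ ≤ 2 * k := hcard
    have hsupp_add : Set.ncard {i | (u + w) i ≠ 0} ≤ 2 * k := by
      apply hsupp
      intro i hi
      rw [Finset.mem_union] at hi
      push_neg at hi
      simp [hu, hw, hA i hi.1, hB i hi.2]
    have hsupp_sub : Set.ncard {i | (u - w) i ≠ 0} ≤ 2 * k := by
      apply hsupp
      intro i hi
      rw [Finset.mem_union] at hi
      push_neg at hi
      simp [hu, hw, hA i hi.1, hB i hi.2]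
    have hup := (hRIP (u + w) hsupp_add).2
    have hlo := (hRIP (u - w) hsupp_sub).1
    have huw0 : ∀ i, u i * w i = 0 := by
      intro i
      have := hxy0 i
      simp only [hu, hw]
      calc c * x i * (c⁻¹ * y i) = (c * c⁻¹) * (x i * y i) := by ring
        _ = 0 := by rw [this, mul_zero]
    have hsum_add : ∑ i, (u + w) i ^ 2 = (∑ i, u i ^ 2) + (∑ i, w i ^ 2) := by
      have : ∀ i, (u + w) i ^ 2 = u i ^ 2 + w i ^ 2 := by
        intro i
        have := huw0 i
        simp only [Pi.add_apply]
        nlinarith [huw0 i]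
      simp_rw [this, Finset.sum_add_distrib]
    have hsum_sub : ∑ i, (u - w) i ^ 2 = (∑ i, u i ^ 2) + (∑ i, w i ^ 2) := by
      have : ∀ i, (u - w) i ^ 2 = u i ^ 2 + w i ^ 2 := by
        intro i
        simp only [Pi.sub_apply]
        nlinarith [huw0 i]
      simp_rw [this, Finset.sum_add_distrib]
    have hu2 : ∑ i, u i ^ 2 = a * ∑ i, x i ^ 2 := by
      simp_rw [hu, mul_pow, ← Finset.mul_sum]
      rw [← hcc]; ring
    have hw2 : ∑ i, w i ^ 2 = (∑ i, y i ^ 2) / a := by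
      simp_rw [hw, mul_pow, ← Finset.mul_sum]
      rw [div_eq_inv_mul, ← hcc]
      rw [mul_inv]
      ring
    have hmv_add : Θ.mulVec (u + w) = Θ.mulVec u + Θ.mulVec w := Θ.mulVec_add u w
    have hmv_sub : Θ.mulVec (u - w) = Θ.mulVec u - Θ.mulVec w := Θ.mulVec_sub u w
    have hpar : (∑ i, (Θ.mulVec (u + w)) i ^ 2) - (∑ i, (Θ.mulVec (u - w)) i ^ 2) =
        4 * ∑ i, (Θ.mulVec u) i * (Θ.mulVec w) i := by
      rw [hmv_add, hmv_sub, ← Finset.sum_sub_distrib, Finset.mul_sum]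
      apply Finset.sum_congr rfl
      intro i _
      simp only [Pi.add_apply, Pi.sub_apply]
      ring
    have hipuw : ∑ i, (Θ.mulVec u) i * (Θ.mulVec w) i =
        ∑ i, (Θ.mulVec x) i * (Θ.mulVec y) i := by
      have hu' : u = c • x := by funext i; simp [hu]
      have hw' : w = c⁻¹ • y := by funext i; simp [hw]
      rw [hu', hw', Θ.mulVec_smul, Θ.mulVec_smul]
      apply Finset.sum_congr rfl
      intro i _
      simp only [Pi.smul_apply, smul_eq_mul]
      field_simp
    rw [hsum_add] at hup
    rw [hsum_sub] at hlo
    rw [hipuw] at hpar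
    rw [hu2, hw2] at hup hlo
    nlinarith [hpar, hup, hlo]
  by_cases hx0 : eucNorm x = 0
  · have : x = 0 := enorm_eq_zero hx0
    subst this
    rw [hx0]
    simp [Matrix.mulVec_zero]
  by_cases hy0 : eucNorm y = 0
  · have : y = 0 := enorm_eq_zero hy0
    subst this
    rw [hy0]
    simp [Matrix.mulVec_zero]
  · have hxpos : 0 < eucNorm x := lt_of_le_of_ne (enorm_nonneg x) (Ne.symm hx0)
    have hypos : 0 < eucNorm y := lt_of_le_of_ne (enorm_nonneg y) (Ne.symm hy0)
    have ha : 0 < eucNorm y / eucNorm x := div_pos hypos hxpos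
    have hkey := key _ ha
    have hP : ∑ i, x i ^ 2 = eucNorm x ^ 2 := (enorm_sq x).symm
    have hQ : ∑ i, y i ^ 2 = eucNorm y ^ 2 := (enorm_sq y).symm
    rw [hP, hQ] at hkey
    have heq : (eucNorm y / eucNorm x) * eucNorm x ^ 2 + eucNorm y ^ 2 / (eucNorm y / eucNorm x) =
        2 * (eucNorm x * eucNorm y) := by
      field_simp
      ring
    rw [heq] at hkey
    nlinarith [hkey]



lemma disjoint_foldr {n : ℕ} (A : Finset (Fin n)) (l : List (Finset (Fin n)))
    (h : ∀ T ∈ l, Disjoint A T) : Disjoint A (l.foldr (· ∪ ·) ∅) := by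
  induction l with
  | nil => simp
  | cons B l ihl =>
    simp only [List.foldr_cons, Finset.disjoint_union_right]
    exact ⟨h B (List.mem_cons_self), ihl fun T hT => h T (List.mem_cons_of_mem _ hT)⟩

lemma res_union_of_disjoint {n : ℕ} {A B : Finset (Fin n)} (h : Disjoint A B)
    (v : Fin n → ℝ) : res (A ∪ B) v = res A v + res B v := by
  funext i
  simp only [res, Pi.add_apply, Finset.mem_union]
  by_cases hiA : i ∈ A
  · have hiB : i ∉ B := Finset.disjoint_left.1 h hiA
    simp [hiA, hiB]
  · by_cases hiB : i ∈ B <;> simp [hiA, hiB]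

lemma res_foldr {n : ℕ} (l : List (Finset (Fin n))) (hl : l.Pairwise (fun A B => Disjoint A B))
    (v : Fin n → ℝ) : res (l.foldr (· ∪ ·) ∅) v = (l.map (fun T => res T v)).sum := by
  induction l with
  | nil => funext i; simp [res]
  | cons A l ihl =>
    rw [List.pairwise_cons] at hl
    simp only [List.foldr_cons, List.map_cons, List.sum_cons]
    rw [res_union_of_disjoint (disjoint_foldr A l hl.1) v, ihl hl.2]

lemma enorm_list_sum_le {m : ℕ} (l : List (Fin m → ℝ)) :
    eucNorm l.sum ≤ (l.map eucNorm).sum := by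
  induction l with
  | nil => simp [enorm_zero]
  | cons a l ihl =>
    simp only [List.sum_cons, List.map_cons]
    exact (enorm_add_le a l.sum).trans (by linarith)

lemma ip_list_sum {m : ℕ} (u : Fin m → ℝ) (l : List (Fin m → ℝ)) :
    ∑ i, u i * l.sum i = (l.map (fun w => ∑ i, u i * w i)).sum := by
  induction l with
  | nil => simp
  | cons a l ihl =>
    simp only [List.sum_cons, List.map_cons, Pi.add_apply, mul_add,
      Finset.sum_add_distrib, ihl]

lemma mulVec_list_sum {m n : ℕ} (Θ : Matrix (Fin m) (Fin n) ℝ) (l : List (Fin n → ℝ)) :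
    Θ.mulVec l.sum = (l.map (fun v => Θ.mulVec v)).sum := by
  induction l with
  | nil => simp [Matrix.mulVec_zero]
  | cons a l ihl =>
    simp only [List.sum_cons, List.map_cons, Matrix.mulVec_add, ihl]


end CandesAux

set_option maxHeartbeats 1000000 in
theorem stmt11 {m n k : ℕ} (hk : 0 < k)
    (Θ : Matrix (Fin m) (Fin n) ℝ) (δ : ℝ)
    (hRIP : RIP Θ (2 * k) δ) (hδ : δ < Real.sqrt 2 - 1)
    (s : Fin n → ℝ) (e z : Fin m → ℝ) (ε : ℝ)
    (hz : z = Θ.mulVec s + e) (he : eucNorm e ≤ ε)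
    (sk : Fin n → ℝ) (hsk : Set.ncard {i | sk i ≠ 0} ≤ k)
    (hbest : ∀ u : Fin n → ℝ, Set.ncard {i | u i ≠ 0} ≤ k →
      l1norm (s - sk) ≤ l1norm (s - u))
    (shat : Fin n → ℝ)
    (hfeas : eucNorm (z - Θ.mulVec shat) ≤ ε)
    (hmin : ∀ s' : Fin n → ℝ, eucNorm (z - Θ.mulVec s') ≤ ε → l1norm shat ≤ l1norm s') :
    eucNorm (shat - s) ≤
      (4 * Real.sqrt (1 + δ) / (1 - (1 + Real.sqrt 2) * δ)) * ε +
      (2 * (1 - (1 - Real.sqrt 2) * δ) / (1 - (1 + Real.sqrt 2) * δ)) / Real.sqrt k *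
        l1norm (s - sk) := by
  classical
  open CandesAux in
  have hsqrt2sq : Real.sqrt 2 ^ 2 = 2 := Real.sq_sqrt (by norm_num)
  have hsqrt2pos : 0 < Real.sqrt 2 := Real.sqrt_pos.2 (by norm_num)
  have hD : 0 < 1 - (1 + Real.sqrt 2) * δ := by
    have h1 : (0:ℝ) < 1 + Real.sqrt 2 := by positivity
    have h2 : (1 + Real.sqrt 2) * δ < (1 + Real.sqrt 2) * (Real.sqrt 2 - 1) :=
      mul_lt_mul_of_pos_left hδ h1
    have h3 : (1 + Real.sqrt 2) * (Real.sqrt 2 - 1) = 1 := by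
      linear_combination hsqrt2sq
    linarith
  have hε0 : 0 ≤ ε := le_trans (enorm_nonneg e) he
  have he0nn : 0 ≤ l1norm (s - sk) := Finset.sum_nonneg fun i _ => abs_nonneg _
  have hk0 : (0:ℝ) < Real.sqrt k := Real.sqrt_pos.2 (by exact_mod_cast hk)
  rcases Nat.eq_zero_or_pos n with hn | hn
  · subst hn
    have h1 : eucNorm (shat - s) = 0 := by simp [eucNorm]
    have h2 : l1norm (s - sk) = 0 := by simp [l1norm]
    rw [h1, h2]
    have : 0 ≤ (4 * Real.sqrt (1 + δ) / (1 - (1 + Real.sqrt 2) * δ)) * ε :=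
      mul_nonneg (div_nonneg (by positivity) hD.le) hε0
    simpa using this
  have hδ0 : 0 ≤ δ := by
    set i0 : Fin n := ⟨0, hn⟩
    set x : Fin n → ℝ := fun j => if j = i0 then (1:ℝ) else 0 with hx
    have hsupp : Set.ncard {j | x j ≠ 0} ≤ 2 * k := by
      have hxe : {j | x j ≠ 0} = {i0} := by
        ext j
        simp only [hx, Set.mem_setOf_eq, Set.mem_singleton_iff]
        by_cases hj : j = i0 <;> simp [hj]
      rw [hxe, Set.ncard_singleton]; omega
    have hsum1 : ∑ j, x j ^ 2 = 1 := by
      have hpt : ∀ j, x j ^ 2 = if j = i0 then 1 else 0 := by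
        intro j; by_cases hj : j = i0 <;> simp [hx, hj]
      simp_rw [hpt]
      simp
    obtain ⟨hlo, hup⟩ := hRIP x hsupp
    rw [hsum1] at hlo hup; linarith
  set h : Fin n → ℝ := shat - s with hh
  clear_value h
  set e0 : ℝ := l1norm (s - sk) with he0
  clear_value e0
  set T0 : Finset (Fin n) := Finset.univ.filter (fun i => sk i ≠ 0) with hT0
  have hT0card : T0.card ≤ k := by
    have hco : (↑T0 : Set (Fin n)) = {i | sk i ≠ 0} := by ext i; simp [hT0]
    rw [← Set.ncard_coe_finset, hco]; exact hsk
  have hskzero : ∀ i, i ∉ T0 → sk i = 0 := by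
    intro i hi
    by_contra hne
    exact hi (by simp [hT0, hne])
  obtain ⟨T1, rest, hdisj, hcards, hunion, hsumb⟩ := chunk k hk h T0ᶜ
  have hT1sub : T1 ⊆ T0ᶜ := hunion ▸ subset_foldr_union _ _ (List.mem_cons_self)
  have hrestsub : ∀ T ∈ rest, T ⊆ T0ᶜ := fun T hT =>
    hunion ▸ subset_foldr_union _ _ (List.mem_cons_of_mem _ hT)
  have hT1card : T1.card ≤ k := hcards T1 (List.mem_cons_self)
  have hdisjT0T1 : Disjoint T0 T1 := by
    rw [Finset.disjoint_right]
    intro i hiT1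
    simpa [Finset.mem_compl] using hT1sub hiT1
  have hdisjT0 : ∀ T ∈ rest, Disjoint T0 T := by
    intro T hT
    rw [Finset.disjoint_right]
    intro i hiT
    simpa [Finset.mem_compl] using hrestsub T hT hiT
  have hdisjT1 : ∀ T ∈ rest, Disjoint T1 T := fun T hT =>
    (List.pairwise_cons.1 hdisj).1 T hT
  set h0 : Fin n → ℝ := res T0 h with hh0
  set h1v : Fin n → ℝ := res T1 h with hh1v
  set h01 : Fin n → ℝ := res (T0 ∪ T1) h with hh01def
  clear_value h0 h1v h01
  have hh01 : h01 = h0 + h1v := by rw [hh0, hh1v, hh01def]; exact res_union_of_disjoint hdisjT0T1 h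
  set a0 : ℝ := eucNorm h0 with ha0
  set a1 : ℝ := eucNorm h1v with ha1
  set a01 : ℝ := eucNorm h01 with ha01
  set ρ : ℝ := (rest.map (fun T => eucNorm (res T h))).sum with hρdef
  clear_value a0 a1 a01 ρ
  have ha0nn : 0 ≤ a0 := by rw [ha0]; exact enorm_nonneg _
  have ha1nn : 0 ≤ a1 := by rw [ha1]; exact enorm_nonneg _
  have ha01nn : 0 ≤ a01 := by rw [ha01]; exact enorm_nonneg _
  have hρnn : 0 ≤ ρ := by
    rw [hρdef]
    apply List.sum_nonneg
    intro x hx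
    obtain ⟨T, _, rfl⟩ := List.mem_map.1 hx
    exact enorm_nonneg _
  -- cone constraint
  have hl1 : l1norm shat ≤ l1norm s := by
    apply hmin
    have : z - Θ.mulVec s = e := by rw [hz]; abel
    rw [this]; exact he
  have hshat : ∀ i, shat i = s i + h i := by intro i; simp [hh]
  have hsc : ∑ i ∈ T0ᶜ, |s i| ≤ e0 := by
    have h1 : ∑ i ∈ T0ᶜ, |s i| = ∑ i ∈ T0ᶜ, |s i - sk i| := by
      apply Finset.sum_congr rfl
      intro i hi
      rw [hskzero i (Finset.mem_compl.1 hi), sub_zero]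
    rw [h1, he0]
    exact Finset.sum_le_sum_of_subset_of_nonneg (Finset.subset_univ _)
      (fun i _ _ => abs_nonneg _)
  have hcone : ∑ i ∈ T0ᶜ, |h i| ≤ ∑ i ∈ T0, |h i| + 2 * e0 := by
    have hsplit1 : ∑ i ∈ T0, |shat i| + ∑ i ∈ T0ᶜ, |shat i| = l1norm shat :=
      Finset.sum_add_sum_compl T0 _
    have hsplit2 : ∑ i ∈ T0, |s i| + ∑ i ∈ T0ᶜ, |s i| = l1norm s :=
      Finset.sum_add_sum_compl T0 _
    have hA : ∑ i ∈ T0, |s i| - ∑ i ∈ T0, |h i| ≤ ∑ i ∈ T0, |shat i| := by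
      rw [← Finset.sum_sub_distrib]
      apply Finset.sum_le_sum
      intro i _
      rw [hshat i]
      have := abs_add_le (s i + h i) (-(h i))
      simp only [add_neg_cancel_right, abs_neg] at this
      linarith
    have hB : ∑ i ∈ T0ᶜ, |h i| - ∑ i ∈ T0ᶜ, |s i| ≤ ∑ i ∈ T0ᶜ, |shat i| := by
      rw [← Finset.sum_sub_distrib]
      apply Finset.sum_le_sum
      intro i _
      rw [hshat i]
      have := abs_add_le (s i + h i) (-(s i))
      simp only [abs_neg] at this
      have h2 : s i + h i + -(s i) = h i := by ring
      rw [h2] at this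
      linarith
    linarith
  -- tube constraint
  have htube : eucNorm (Θ.mulVec h) ≤ 2 * ε := by
    have hmv : Θ.mulVec h = e - (z - Θ.mulVec shat) := by
      rw [hh, hz, Matrix.mulVec_sub]
      abel
    rw [hmv]
    calc eucNorm (e - (z - Θ.mulVec shat)) ≤ eucNorm e + eucNorm (z - Θ.mulVec shat) :=
          enorm_sub_le _ _
      _ ≤ 2 * ε := by linarith
  -- ρ bounds
  have hsumb' : ρ ≤ (∑ i ∈ T0ᶜ, |h i|) / Real.sqrt k := by
    rw [hρdef]
    have hmapeq : (rest.map (fun T => eucNorm (res T h))) =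
        (rest.map (fun T => Real.sqrt (∑ i ∈ T, h i ^ 2))) := by
      apply List.map_congr_left
      intro T _
      rw [enorm_res]
    rw [hmapeq]
    exact hsumb
  have hCS : ∑ i ∈ T0, |h i| ≤ Real.sqrt k * a0 := by
    have h1 : (∑ i ∈ T0, |h i| * 1) ^ 2 ≤ (∑ i ∈ T0, |h i| ^ 2) * (∑ i ∈ T0, (1:ℝ) ^ 2) :=
      Finset.sum_mul_sq_le_sq_mul_sq T0 _ _
    simp only [mul_one, one_pow, Finset.sum_const, nsmul_eq_mul] at h1
    have h2 : ∑ i ∈ T0, |h i| ^ 2 = ∑ i ∈ T0, h i ^ 2 := by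
      apply Finset.sum_congr rfl; intro i _; rw [sq_abs]
    rw [h2] at h1
    have h3 : (∑ i ∈ T0, |h i|) ^ 2 ≤ (∑ i ∈ T0, h i ^ 2) * k := by
      calc (∑ i ∈ T0, |h i|) ^ 2 ≤ (∑ i ∈ T0, h i ^ 2) * (T0.card : ℝ) := h1
        _ ≤ (∑ i ∈ T0, h i ^ 2) * k := by
            apply mul_le_mul_of_nonneg_left (by exact_mod_cast hT0card)
            exact Finset.sum_nonneg fun i _ => sq_nonneg _
    have h4 : ∑ i ∈ T0, |h i| = Real.sqrt ((∑ i ∈ T0, |h i|) ^ 2) :=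
      (Real.sqrt_sq (Finset.sum_nonneg fun i _ => abs_nonneg _)).symm
    rw [h4]
    calc Real.sqrt ((∑ i ∈ T0, |h i|) ^ 2) ≤ Real.sqrt ((∑ i ∈ T0, h i ^ 2) * k) :=
          Real.sqrt_le_sqrt h3
      _ = Real.sqrt (∑ i ∈ T0, h i ^ 2) * Real.sqrt k :=
          Real.sqrt_mul (Finset.sum_nonneg fun i _ => sq_nonneg _) _
      _ = Real.sqrt k * a0 := by rw [ha0, hh0, enorm_res]; ring
  have hρb : ρ ≤ a0 + 2 * (e0 / Real.sqrt k) := by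
    calc ρ ≤ (∑ i ∈ T0ᶜ, |h i|) / Real.sqrt k := hsumb'
      _ ≤ (Real.sqrt k * a0 + 2 * e0) / Real.sqrt k := by
          exact (div_le_div_iff_of_pos_right hk0).2 (by linarith)
      _ = a0 + 2 * (e0 / Real.sqrt k) := by
          rw [add_div, mul_div_cancel_left₀ _ (ne_of_gt hk0), mul_div_assoc]
  -- norm relations
  have hsq01 : a01 ^ 2 = ∑ i ∈ T0 ∪ T1, h i ^ 2 := by
    rw [ha01, hh01def, enorm_res, Real.sq_sqrt (Finset.sum_nonneg fun i _ => sq_nonneg _)]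
  have hsq0 : a0 ^ 2 = ∑ i ∈ T0, h i ^ 2 := by
    rw [ha0, hh0, enorm_res, Real.sq_sqrt (Finset.sum_nonneg fun i _ => sq_nonneg _)]
  have hsq1 : a1 ^ 2 = ∑ i ∈ T1, h i ^ 2 := by
    rw [ha1, hh1v, enorm_res, Real.sq_sqrt (Finset.sum_nonneg fun i _ => sq_nonneg _)]
  have hpyth : a01 ^ 2 = a0 ^ 2 + a1 ^ 2 := by
    rw [hsq01, hsq0, hsq1, Finset.sum_union hdisjT0T1]
  have ha0le : a0 ≤ a01 := by
    apply le_of_pow_le_pow_left₀ (two_ne_zero) ha01nn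
    rw [hpyth]
    linarith [sq_nonneg a1]
  have hsum01 : a0 + a1 ≤ Real.sqrt 2 * a01 := by
    have h1 : (a0 + a1) ^ 2 ≤ 2 * a01 ^ 2 := by linarith [two_mul_le_add_sq a0 a1, hpyth]
    calc a0 + a1 = Real.sqrt ((a0 + a1) ^ 2) := (Real.sqrt_sq (by linarith)).symm
      _ ≤ Real.sqrt (2 * a01 ^ 2) := Real.sqrt_le_sqrt h1
      _ = Real.sqrt 2 * a01 := by
          rw [Real.sqrt_mul (by norm_num), Real.sqrt_sq ha01nn]
  -- RIP on h01
  have hsupp01 : Set.ncard {i | h01 i ≠ 0} ≤ 2 * k := by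
    have := support_ncard_le (T0 ∪ T1) h01 (fun i hi => by simp [hh01def, res, hi])
    calc Set.ncard {i | h01 i ≠ 0} ≤ (T0 ∪ T1).card := this
      _ ≤ T0.card + T1.card := Finset.card_union_le _ _
      _ ≤ 2 * k := by omega
  obtain ⟨hripl, hripu⟩ := hRIP h01 hsupp01
  set b : ℝ := eucNorm (Θ.mulVec h01) with hb
  clear_value b
  have hbnn : 0 ≤ b := by rw [hb]; exact enorm_nonneg _
  have hb2 : b ^ 2 = ∑ i, (Θ.mulVec h01) i ^ 2 := by rw [hb]; exact enorm_sq _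
  have ha01sq : a01 ^ 2 = ∑ i, h01 i ^ 2 := by rw [ha01]; exact enorm_sq _
  have hlo' : (1 - δ) * a01 ^ 2 ≤ b ^ 2 := by rw [hb2, ha01sq]; exact hripl
  have hble : b ≤ Real.sqrt (1 + δ) * a01 := by
    have h1 : b ^ 2 ≤ (1 + δ) * a01 ^ 2 := by rw [hb2, ha01sq]; exact hripu
    calc b = Real.sqrt (b ^ 2) := (Real.sqrt_sq hbnn).symm
      _ ≤ Real.sqrt ((1 + δ) * a01 ^ 2) := Real.sqrt_le_sqrt h1
      _ = Real.sqrt (1 + δ) * a01 := by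
          rw [Real.sqrt_mul (by linarith), Real.sqrt_sq ha01nn]
  -- decomposition of h
  have hres_compl : res T0ᶜ h = h1v + (rest.map (fun T => res T h)).sum := by
    rw [← hunion, res_foldr _ hdisj]
    simp only [List.map_cons, List.sum_cons]
    rw [hh1v]
  have hsplit : h = h0 + res T0ᶜ h := by
    funext i
    simp only [hh0, res, Pi.add_apply, Finset.mem_compl]
    by_cases hi : i ∈ T0 <;> simp [hi]
  have hhdecomp : h = h01 + (rest.map (fun T => res T h)).sum := by
    rw [hh01]
    conv_lhs => rw [hsplit, hres_compl]
    abel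
  -- inner product decomposition
  have hipfull : ∑ i, (Θ.mulVec h01) i * (Θ.mulVec h) i ≤ b * (2 * ε) := by
    rw [hb]
    calc ∑ i, (Θ.mulVec h01) i * (Θ.mulVec h) i
        ≤ eucNorm (Θ.mulVec h01) * eucNorm (Θ.mulVec h) := ip_le _ _
      _ ≤ eucNorm (Θ.mulVec h01) * (2 * ε) :=
          mul_le_mul_of_nonneg_left htube (enorm_nonneg _)
  have hmv : Θ.mulVec h = Θ.mulVec h01 + (rest.map (fun T => Θ.mulVec (res T h))).sum := by
    conv_lhs => rw [hhdecomp]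
    rw [Matrix.mulVec_add, mulVec_list_sum, List.map_map]
    rfl
  have hipdec : ∑ i, (Θ.mulVec h01) i * (Θ.mulVec h) i =
      b ^ 2 + (rest.map (fun T => ∑ i, (Θ.mulVec h01) i * (Θ.mulVec (res T h)) i)).sum := by
    rw [hmv]
    have step1 : ∑ i, (Θ.mulVec h01) i *
        ((Θ.mulVec h01) + (rest.map (fun T => Θ.mulVec (res T h))).sum) i =
        (∑ i, (Θ.mulVec h01) i ^ 2) +
        ∑ i, (Θ.mulVec h01) i * ((rest.map (fun T => Θ.mulVec (res T h))).sum) i := by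
      rw [← Finset.sum_add_distrib]
      apply Finset.sum_congr rfl
      intro i _
      simp only [Pi.add_apply]
      ring
    rw [step1, ← hb2, ip_list_sum, List.map_map]
    rfl
  -- termwise bound
  have hterm : ∀ T ∈ rest, -(∑ i, (Θ.mulVec h01) i * (Θ.mulVec (res T h)) i) ≤
      Real.sqrt 2 * δ * a01 * eucNorm (res T h) := by
    intro T hT
    have hTcard : T.card ≤ k := hcards T (List.mem_cons_of_mem _ hT)
    have haTnn : 0 ≤ eucNorm (res T h) := enorm_nonneg _
    have e1' : -(∑ i, (Θ.mulVec h0) i * (Θ.mulVec (res T h)) i) ≤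
        δ * a0 * eucNorm (res T h) := by
      have e1 := ip_mulVec_le Θ δ hRIP (-h0) (res T h) T0 T
        (fun i hi => by simp [hh0, res, hi]) (fun i hi => by simp [res, hi])
        (hdisjT0 T hT) (by omega)
      rw [Matrix.mulVec_neg, enorm_neg, ← ha0] at e1
      have heqn : ∑ i, (-(Θ.mulVec h0)) i * (Θ.mulVec (res T h)) i =
          -(∑ i, (Θ.mulVec h0) i * (Θ.mulVec (res T h)) i) := by
        rw [← Finset.sum_neg_distrib]
        apply Finset.sum_congr rfl
        intro i _
        simp
      rw [heqn] at e1
      exact e1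
    have e2' : -(∑ i, (Θ.mulVec h1v) i * (Θ.mulVec (res T h)) i) ≤
        δ * a1 * eucNorm (res T h) := by
      have e2 := ip_mulVec_le Θ δ hRIP (-h1v) (res T h) T1 T
        (fun i hi => by simp [hh1v, res, hi]) (fun i hi => by simp [res, hi])
        (hdisjT1 T hT) (by omega)
      rw [Matrix.mulVec_neg, enorm_neg, ← ha1] at e2
      have heqn : ∑ i, (-(Θ.mulVec h1v)) i * (Θ.mulVec (res T h)) i =
          -(∑ i, (Θ.mulVec h1v) i * (Θ.mulVec (res T h)) i) := by
        rw [← Finset.sum_neg_distrib]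
        apply Finset.sum_congr rfl
        intro i _
        simp
      rw [heqn] at e2
      exact e2
    have hsplitip : ∑ i, (Θ.mulVec h01) i * (Θ.mulVec (res T h)) i =
        (∑ i, (Θ.mulVec h0) i * (Θ.mulVec (res T h)) i) +
        (∑ i, (Θ.mulVec h1v) i * (Θ.mulVec (res T h)) i) := by
      rw [hh01, Matrix.mulVec_add, ← Finset.sum_add_distrib]
      apply Finset.sum_congr rfl
      intro i _
      simp only [Pi.add_apply]
      ring
    have hmul : δ * (a0 + a1) ≤ Real.sqrt 2 * δ * a01 := by
      have := mul_le_mul_of_nonneg_left hsum01 hδ0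
      linarith
    have hstep : δ * (a0 + a1) * eucNorm (res T h) ≤
        Real.sqrt 2 * δ * a01 * eucNorm (res T h) :=
      mul_le_mul_of_nonneg_right hmul haTnn
    have hexp : δ * (a0 + a1) * eucNorm (res T h) =
        δ * a0 * eucNorm (res T h) + δ * a1 * eucNorm (res T h) := by ring
    rw [hsplitip]
    linarith
  -- sum of termwise bounds
  have hnegsum : -((rest.map (fun T => ∑ i, (Θ.mulVec h01) i * (Θ.mulVec (res T h)) i)).sum) ≤
      Real.sqrt 2 * δ * a01 * ρ := by
    have hneg : (rest.map (fun T =>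
        -(∑ i, (Θ.mulVec h01) i * (Θ.mulVec (res T h)) i))).sum =
        -((rest.map (fun T => ∑ i, (Θ.mulVec h01) i * (Θ.mulVec (res T h)) i)).sum) := by
      have := List.sum_map_mul_left rest
        (fun T => ∑ i, (Θ.mulVec h01) i * (Θ.mulVec (res T h)) i) (-1)
      simpa [neg_one_mul] using this
    have hle : (rest.map (fun T =>
        -(∑ i, (Θ.mulVec h01) i * (Θ.mulVec (res T h)) i))).sum ≤
        (rest.map (fun T => Real.sqrt 2 * δ * a01 * eucNorm (res T h))).sum :=
      List.sum_le_sum hterm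
    have hright : (rest.map (fun T => Real.sqrt 2 * δ * a01 * eucNorm (res T h))).sum =
        Real.sqrt 2 * δ * a01 * ρ := by
      rw [hρdef]
      exact List.sum_map_mul_left rest (fun T => eucNorm (res T h)) (Real.sqrt 2 * δ * a01)
    rw [← hneg, ← hright]
    exact hle
  -- combine
  have hb2le : b ^ 2 ≤ b * (2 * ε) + Real.sqrt 2 * δ * a01 * ρ := by linarith [hipdec]
  have hbb : b * (2 * ε) ≤ Real.sqrt (1 + δ) * a01 * (2 * ε) :=
    mul_le_mul_of_nonneg_right hble (by linarith)
  have hkey2 : (1 - δ) * a01 ^ 2 ≤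
      2 * Real.sqrt (1 + δ) * ε * a01 + Real.sqrt 2 * δ * a01 * ρ := by
    linarith [hlo', hb2le, hbb]
  have hρ01 : ρ ≤ a01 + 2 * (e0 / Real.sqrt k) := by linarith
  have hkey : (1 - (1 + Real.sqrt 2) * δ) * a01 ≤
      2 * Real.sqrt (1 + δ) * ε + 2 * Real.sqrt 2 * δ * (e0 / Real.sqrt k) := by
    rcases eq_or_lt_of_le ha01nn with heq | hpos
    · have r1 : 0 ≤ 2 * Real.sqrt (1 + δ) * ε :=
        mul_nonneg (mul_nonneg (by norm_num) (Real.sqrt_nonneg _)) hε0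
      have r2 : 0 ≤ 2 * Real.sqrt 2 * δ * (e0 / Real.sqrt k) :=
        mul_nonneg (mul_nonneg (mul_nonneg (by norm_num) (Real.sqrt_nonneg _)) hδ0)
          (div_nonneg he0nn hk0.le)
      rw [← heq]
      simpa using add_nonneg r1 r2
    · have hc : 0 ≤ Real.sqrt 2 * δ * a01 :=
        mul_nonneg (mul_nonneg (Real.sqrt_nonneg _) hδ0) ha01nn
      have hmulρ : Real.sqrt 2 * δ * a01 * ρ ≤
          Real.sqrt 2 * δ * a01 * (a01 + 2 * (e0 / Real.sqrt k)) :=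
        mul_le_mul_of_nonneg_left hρ01 hc
      have hfinal2 : (1 - (1 + Real.sqrt 2) * δ) * a01 * a01 ≤
          (2 * Real.sqrt (1 + δ) * ε + 2 * Real.sqrt 2 * δ * (e0 / Real.sqrt k)) * a01 := by
        linarith [hkey2, hmulρ]
      exact (mul_le_mul_iff_of_pos_right hpos).1 hfinal2
  -- final assembly
  have hfin1 : eucNorm h ≤ a01 + ρ := by
    calc eucNorm h = eucNorm (h01 + (rest.map (fun T => res T h)).sum) := by
          conv_lhs => rw [hhdecomp]
      _ ≤ eucNorm h01 + eucNorm ((rest.map (fun T => res T h)).sum) := enorm_add_le _ _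
      _ ≤ a01 + ρ := by
          apply add_le_add (le_of_eq ha01.symm)
          have hl := enorm_list_sum_le (rest.map (fun T => res T h))
          rw [List.map_map] at hl
          rw [hρdef]
          exact hl
  have hgoal : eucNorm h ≤ 2 * a01 + 2 * (e0 / Real.sqrt k) := by linarith
  have ha01b : a01 ≤ (2 * Real.sqrt (1 + δ) * ε + 2 * Real.sqrt 2 * δ * (e0 / Real.sqrt k)) /
      (1 - (1 + Real.sqrt 2) * δ) := by
    rw [le_div_iff₀ hD]
    linarith [hkey]
  have halg : 2 * ((2 * Real.sqrt (1 + δ) * ε + 2 * Real.sqrt 2 * δ * (e0 / Real.sqrt k)) /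
      (1 - (1 + Real.sqrt 2) * δ)) + 2 * (e0 / Real.sqrt k) =
      (4 * Real.sqrt (1 + δ) / (1 - (1 + Real.sqrt 2) * δ)) * ε +
      (2 * (1 - (1 - Real.sqrt 2) * δ) / (1 - (1 + Real.sqrt 2) * δ)) / Real.sqrt k * e0 := by
    have hD' : 1 - (1 + Real.sqrt 2) * δ ≠ 0 := hD.ne'
    field_simp
    linear_combination (-2 * e0) * mul_inv_cancel₀ (show (1 - δ - δ * Real.sqrt 2) ≠ 0 by nlinarith)
  calc eucNorm h ≤ 2 * a01 + 2 * (e0 / Real.sqrt k) := hgoal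
    _ ≤ 2 * ((2 * Real.sqrt (1 + δ) * ε + 2 * Real.sqrt 2 * δ * (e0 / Real.sqrt k)) /
        (1 - (1 + Real.sqrt 2) * δ)) + 2 * (e0 / Real.sqrt k) := by linarith [ha01b]
    _ = _ := halg
end
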